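/- If a graph G has no perfect matching, then w_def(G) ≥ 2δ(G) − def(G). -/

import Mathlib

open scoped Classical

/-- A proper edge-coloring: distinct edges sharing a vertex receive distinct colors. -/
def IsProperEdgeColoring {V : Type*} (G : SimpleGraph V) (c : Sym2 V → ℕ) : Prop :=
  ∀ e ∈ G.edgeSet, ∀ e' ∈ G.edgeSet, e ≠ e' → (∃ v, v ∈ e ∧ v ∈ e') → c e ≠ c e'

/-- A proper `t`-edge-coloring: proper, colors lie in `{1,…,t}`, and all colors are used. -/
def IsProperTEdgeColoring {V : Type*} (G : SimpleGraph V) (t : ℕ) (c : Sym2 V → ℕ) : Prop :=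
  IsProperEdgeColoring G c ∧ (∀ e ∈ G.edgeSet, c e ∈ Finset.Icc 1 t) ∧
    ∀ k ∈ Finset.Icc 1 t, ∃ e ∈ G.edgeSet, c e = k

/-- The vSpectrum of a vertex: the set of colors appearing on edges incident to `v`. -/
noncomputable def vSpectrum {V : Type*} [Fintype V] (G : SimpleGraph V) (c : Sym2 V → ℕ)
    (v : V) : Finset ℕ :=
  (Finset.univ.filter (fun u => G.Adj v u)).image (fun u => c s(v, u))

/-- The deficiency of a finite set of naturals: `max S − min S − |S| + 1`. -/
def setDef (S : Finset ℕ) : ℕ := (S.max.getD 0 - S.min.getD 0) - (S.card - 1)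

/-- The deficiency of a proper edge-coloring: the sum of vertex deficiencies. -/
noncomputable def colDef {V : Type*} [Fintype V] (G : SimpleGraph V) (c : Sym2 V → ℕ) : ℕ :=
  ∑ v, setDef (vSpectrum G c v)

/-- The deficiency of a graph: the minimum deficiency over all proper edge-colorings. -/
noncomputable def graphDef {V : Type*} [Fintype V] (G : SimpleGraph V) : ℕ :=
  sInf {d | ∃ c, IsProperEdgeColoring G c ∧ colDef G c = d}

/-- `w_def G`: the least `t` such that some proper `t`-edge-coloring attains `def(G)`. -/
noncomputable def wdef {V : Type*} [Fintype V] (G : SimpleGraph V) : ℕ :=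
  sInf {t | ∃ c, IsProperTEdgeColoring G t c ∧ colDef G c = graphDef G}

/-- `W_def G`: the greatest `t` such that some proper `t`-edge-coloring attains `def(G)`. -/
noncomputable def Wdef {V : Type*} [Fintype V] (G : SimpleGraph V) : ℕ :=
  sSup {t | ∃ c, IsProperTEdgeColoring G t c ∧ colDef G c = graphDef G}

/-- A graph is interval colorable if some proper edge-coloring has deficiency `0`. -/
def IntervalColorable {V : Type*} [Fintype V] (G : SimpleGraph V) : Prop :=
  ∃ c, IsProperEdgeColoring G c ∧ colDef G c = 0

/-- `w G`: the least `t` such that `G` has an interval `t`-coloring. -/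
noncomputable def wint {V : Type*} [Fintype V] (G : SimpleGraph V) : ℕ :=
  sInf {t | ∃ c, IsProperTEdgeColoring G t c ∧ colDef G c = 0}

/-- `W G`: the greatest `t` such that `G` has an interval `t`-coloring. -/
noncomputable def Wint {V : Type*} [Fintype V] (G : SimpleGraph V) : ℕ :=
  sSup {t | ∃ c, IsProperTEdgeColoring G t c ∧ colDef G c = 0}

section Aux

variable {V : Type*} [Fintype V] {G : SimpleGraph V}

lemma setDef_eq (S : Finset ℕ) (hS : S.Nonempty) :
    setDef S = (S.max' hS - S.min' hS) - (S.card - 1) := by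
  have h1 : S.max.getD 0 = S.max' hS := by
    rw [← Finset.coe_max' hS]; rfl
  have h2 : S.min.getD 0 = S.min' hS := by
    rw [← Finset.coe_min' hS]; rfl
  rw [setDef, h1, h2]

omit [Fintype V] in
lemma edge_ne {v a b : V} (hab : a ≠ b) (hvb : G.Adj v b) : s(v, a) ≠ s(v, b) := by
  intro he
  rcases Sym2.eq_iff.mp he with ⟨_, h⟩ | ⟨h, _⟩
  · exact hab h
  · exact hvb.ne h

lemma vSpectrum_injOn (c : Sym2 V → ℕ) (hc : IsProperEdgeColoring G c) (v : V) :
    Set.InjOn (fun u => c s(v, u)) ↑(Finset.univ.filter (fun u => G.Adj v u)) := by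
  intro a ha b hb hab
  simp only [Finset.coe_filter, Set.mem_setOf_eq] at ha hb
  by_contra hne
  exact hc _ (G.mem_edgeSet.mpr ha.2) _ (G.mem_edgeSet.mpr hb.2)
    (edge_ne hne hb.2) ⟨v, Sym2.mem_mk_left _ _, Sym2.mem_mk_left _ _⟩ hab

lemma vSpectrum_card (c : Sym2 V → ℕ) (hc : IsProperEdgeColoring G c) (v : V) :
    (vSpectrum G c v).card = (Finset.univ.filter (fun u => G.Adj v u)).card :=
  Finset.card_image_of_injOn (vSpectrum_injOn c hc v)

lemma minDegree_le_filter_card (v : V) :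
    G.minDegree ≤ (Finset.univ.filter (fun u => G.Adj v u)).card := by
  have h1 := G.minDegree_le_degree v
  rw [SimpleGraph.degree, SimpleGraph.neighborFinset_eq_filter] at h1
  convert h1 using 2

lemma mem_vSpectrum_iff (c : Sym2 V → ℕ) (v : V) (k : ℕ) :
    k ∈ vSpectrum G c v ↔ ∃ u, G.Adj v u ∧ c s(v, u) = k := by
  simp [vSpectrum]

/-- key counting lemma -/
lemma key_bound (t : ℕ) (c : Sym2 V → ℕ) (hc : IsProperTEdgeColoring G t c)
    (hd : colDef G c = graphDef G)
    (h : ¬∃ M : G.Subgraph, M.IsPerfectMatching) :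
    2 * (G.minDegree : ℤ) - graphDef G ≤ t := by
  by_contra h'
  push_neg at h'
  have htd : t + graphDef G < 2 * G.minDegree := by
    have h0 : (0:ℤ) ≤ (t:ℤ) := by positivity
    omega
  set δ := G.minDegree with hδ
  have hδ1 : 1 ≤ δ := by omega
  -- spectra nonempty
  have hSne : ∀ v : V, (vSpectrum G c v).Nonempty := by
    intro v
    rw [← Finset.card_pos, vSpectrum_card c hc.1 v]
    exact lt_of_lt_of_le hδ1 (minDegree_le_filter_card v)
  -- spectrum elements in [1, t]
  have hmem : ∀ v : V, ∀ k ∈ vSpectrum G c v, 1 ≤ k ∧ k ≤ t := by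
    intro v k hk
    rw [mem_vSpectrum_iff] at hk
    obtain ⟨u, hu, hck⟩ := hk
    have := hc.2.1 _ (G.mem_edgeSet.mpr hu)
    rw [hck, Finset.mem_Icc] at this
    exact this
  set m : V → ℕ := fun v => (vSpectrum G c v).min' (hSne v) with hm
  set M : V → ℕ := fun v => (vSpectrum G c v).max' (hSne v) with hM
  have hm1 : ∀ v, 1 ≤ m v := fun v => (hmem v _ (Finset.min'_mem _ _)).1
  have hMt : ∀ v, M v ≤ t := fun v => (hmem v _ (Finset.max'_mem _ _)).2
  have hmM : ∀ v, m v ≤ M v := fun v => Finset.min'_le _ _ (Finset.max'_mem _ _)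
  have hsub : ∀ v, vSpectrum G c v ⊆ Finset.Icc (m v) (M v) := by
    intro v k hk
    exact Finset.mem_Icc.mpr ⟨Finset.min'_le _ _ hk, Finset.le_max' _ _ hk⟩
  have hspan : ∀ v, δ ≤ M v + 1 - m v := by
    intro v
    have := Finset.card_le_card (hsub v)
    rw [Nat.card_Icc] at this
    calc δ ≤ (Finset.univ.filter (fun u => G.Adj v u)).card := minDegree_le_filter_card v
    _ = (vSpectrum G c v).card := (vSpectrum_card c hc.1 v).symm
    _ ≤ M v + 1 - m v := this
  -- gap sets
  set Gap : V → Finset ℕ := fun v => Finset.Icc (m v) (M v) \ vSpectrum G c v with hGap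
  have hGapCard : ∀ v, (Gap v).card = setDef (vSpectrum G c v) := by
    intro v
    rw [hGap]
    rw [Finset.card_sdiff_of_subset (hsub v), Nat.card_Icc, setDef_eq _ (hSne v)]
    have h1 : (vSpectrum G c v).card ≤ M v + 1 - m v := by
      have := Finset.card_le_card (hsub v); rwa [Nat.card_Icc] at this
    have h2 : 1 ≤ (vSpectrum G c v).card := Finset.card_pos.mpr (hSne v)
    have e1 : M v = (vSpectrum G c v).max' (hSne v) := rfl
    have e2 : m v = (vSpectrum G c v).min' (hSne v) := rfl
    have := hmM v
    omega
  set I : Finset ℕ := Finset.Icc (t + 1 - δ) δ with hI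
  -- every color in I is in every vertex's [m v, M v]
  have hIin : ∀ v, ∀ k ∈ I, k ∈ Finset.Icc (m v) (M v) := by
    intro v k hk
    rw [hI, Finset.mem_Icc] at hk
    rw [Finset.mem_Icc]
    have h1 := hspan v
    have h2 := hMt v
    have h3 := hm1 v
    have h4 := hmM v
    omega
  -- find a color in every spectrum
  have hkex : ∃ k ∈ I, ∀ v : V, k ∈ vSpectrum G c v := by
    by_contra hk
    push_neg at hk
    have hind : I ⊆ Finset.univ.biUnion Gap := by
      intro k hkI
      obtain ⟨v, hv⟩ := hk k hkI
      exact Finset.mem_biUnion.mpr ⟨v, Finset.mem_univ _, Finset.mem_sdiff.mpr ⟨hIin v k hkI, hv⟩⟩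
    have hcard : I.card ≤ graphDef G := by
      calc I.card ≤ (Finset.univ.biUnion Gap).card := Finset.card_le_card hind
      _ ≤ ∑ v, (Gap v).card := Finset.card_biUnion_le
      _ = colDef G c := by rw [colDef]; exact Finset.sum_congr rfl (fun v _ => hGapCard v)
      _ = graphDef G := hd
    rw [hI, Nat.card_Icc] at hcard
    have hV : Nonempty V := by
      by_contra hV
      rw [not_nonempty_iff] at hV
      exact h ⟨⊤, fun v _ => (IsEmpty.false v).elim, fun v => (IsEmpty.false v).elim⟩
    obtain ⟨v0⟩ := hV
    have hδt : δ ≤ t := by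
      have h1 := hspan v0; have h2 := hMt v0; have h3 := hm1 v0; have h4 := hmM v0; omega
    omega
  obtain ⟨k, hkI, hkall⟩ := hkex
  -- build perfect matching
  apply h
  refine ⟨{ verts := Set.univ
            Adj := fun a b => G.Adj a b ∧ c s(a, b) = k
            adj_sub := fun hab => hab.1
            edge_vert := fun _ => Set.mem_univ _
            symm := ⟨fun a b hab => ⟨hab.1.symm, by rw [Sym2.eq_swap]; exact hab.2⟩⟩ }, ?_, ?_⟩
  · intro v _
    obtain ⟨u, hu, hcu⟩ := (mem_vSpectrum_iff c v k).mp (hkall v)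
    refine ⟨u, ⟨hu, hcu⟩, ?_⟩
    intro w ⟨hw, hcw⟩
    by_contra hne
    exact hc.1 _ (G.mem_edgeSet.mpr hw) _ (G.mem_edgeSet.mpr hu)
      (edge_ne hne hu) ⟨v, Sym2.mem_mk_left _ _, Sym2.mem_mk_left _ _⟩ (by rw [hcw, hcu])
  · intro v
    exact Set.mem_univ v

end Aux

section Aux2

variable {V : Type*} [Fintype V] {G : SimpleGraph V}

lemma exists_optimal : ∃ c : Sym2 V → ℕ, IsProperEdgeColoring G c ∧ colDef G c = graphDef G := by
  have hne : {d | ∃ c, IsProperEdgeColoring G c ∧ colDef G c = d}.Nonempty := by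
    haveI : Encodable (Sym2 V) := Fintype.toEncodable _
    refine ⟨colDef G (fun e => Encodable.encode e), fun e => Encodable.encode e, ?_, rfl⟩
    intro e _ e' _ hne _
    exact fun hcc => hne (Encodable.encode_injective hcc)
  obtain ⟨c, hc, hcd⟩ := Nat.sInf_mem hne
  exact ⟨c, hc, hcd⟩

lemma exists_t_optimal :
    ∃ t, ∃ c : Sym2 V → ℕ, IsProperTEdgeColoring G t c ∧ colDef G c = graphDef G := by
  obtain ⟨c, hc, hcd⟩ := exists_optimal (G := G)
  set U : Finset ℕ := ((Finset.univ : Finset (Sym2 V)).filter (fun e => e ∈ G.edgeSet)).image c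
    with hU
  have hmemU : ∀ e ∈ G.edgeSet, c e ∈ U := by
    intro e he
    exact Finset.mem_image.mpr ⟨e, Finset.mem_filter.mpr ⟨Finset.mem_univ _, he⟩, rfl⟩
  set t := U.card with ht
  set f : ℕ → ℕ := fun k => (U.filter (· ≤ k)).card with hf
  have hmono : Monotone f := by
    intro a b hab
    exact Finset.card_le_card (Finset.monotone_filter_right U (fun x _ hx => le_trans hx hab))
  have hsmono : ∀ a ∈ U, ∀ b ∈ U, a < b → f a < f b := by
    intro a _ b hb hab
    apply Finset.card_lt_card
    constructor
    · exact Finset.monotone_filter_right U (fun x _ hx => le_trans hx hab.le)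
    · intro hcon
      have : b ∈ U.filter (· ≤ a) := hcon (Finset.mem_filter.mpr ⟨hb, le_refl b⟩)
      exact absurd (Finset.mem_filter.mp this).2 (not_le.mpr hab)
  have hinj : Set.InjOn f ↑U := by
    intro a ha b hb hab
    by_contra hne
    rcases lt_or_gt_of_ne hne with hl | hl
    · exact absurd hab (ne_of_lt (hsmono a ha b hb hl))
    · exact absurd hab.symm (ne_of_lt (hsmono b hb a ha hl))
  have hge1 : ∀ a ∈ U, 1 ≤ f a := by
    intro a ha
    exact Finset.card_pos.mpr ⟨a, Finset.mem_filter.mpr ⟨ha, le_refl a⟩⟩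
  have hlet : ∀ a, f a ≤ t :=
    fun a => Finset.card_le_card (Finset.filter_subset _ _)
  have hlip : ∀ a b, a ≤ b → f b - f a ≤ b - a := by
    intro a b hab
    have hsub : U.filter (· ≤ b) ⊆ U.filter (· ≤ a) ∪ Finset.Ioc a b := by
      intro x hx
      rw [Finset.mem_filter] at hx
      rcases le_or_gt x a with hxa | hxa
      · exact Finset.mem_union_left _ (Finset.mem_filter.mpr ⟨hx.1, hxa⟩)
      · exact Finset.mem_union_right _ (Finset.mem_Ioc.mpr ⟨hxa, hx.2⟩)
    have := le_trans (Finset.card_le_card hsub) (Finset.card_union_le _ _)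
    rw [Nat.card_Ioc] at this
    have e1 : f a = (U.filter (· ≤ a)).card := rfl
    have e2 : f b = (U.filter (· ≤ b)).card := rfl
    omega
  have himg : U.image f = Finset.Icc 1 t := by
    apply Finset.eq_of_subset_of_card_le
    · intro k hk
      obtain ⟨a, ha, hfa⟩ := Finset.mem_image.mp hk
      exact Finset.mem_Icc.mpr ⟨hfa ▸ hge1 a ha, hfa ▸ hlet a⟩
    · rw [Nat.card_Icc, Finset.card_image_of_injOn hinj]
      omega
  refine ⟨t, fun e => f (c e), ⟨?_, ?_, ?_⟩, ?_⟩
  · intro e he e' he' hne hv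
    exact fun hcc => hc e he e' he' hne hv (hinj (hmemU e he) (hmemU e' he') hcc)
  · intro e he
    exact Finset.mem_Icc.mpr ⟨hge1 _ (hmemU e he), hlet _⟩
  · intro k hk
    have hk2 : k ∈ U.image f := by rw [himg]; exact hk
    obtain ⟨a, ha, hfa⟩ := Finset.mem_image.mp hk2
    obtain ⟨e, he, hce⟩ := Finset.mem_image.mp ha
    rw [Finset.mem_filter] at he
    exact ⟨e, he.2, by show f (c e) = k; rw [hce, hfa]⟩
  · -- colDef equals graphDef
    have hproper : IsProperEdgeColoring G (fun e => f (c e)) := by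
      intro e he e' he' hne hv
      exact fun hcc => hc e he e' he' hne hv (hinj (hmemU e he) (hmemU e' he') hcc)
    have hge : graphDef G ≤ colDef G (fun e => f (c e)) :=
      Nat.sInf_le ⟨fun e => f (c e), hproper, rfl⟩
    have hle : colDef G (fun e => f (c e)) ≤ colDef G c := by
      apply Finset.sum_le_sum
      intro v _
      have himgspec : vSpectrum G (fun e => f (c e)) v = (vSpectrum G c v).image f := by
        rw [vSpectrum, vSpectrum, Finset.image_image]
        rfl
      rw [himgspec]
      rcases Finset.eq_empty_or_nonempty (vSpectrum G c v) with hS | hS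
      · rw [hS, Finset.image_empty]
      · have hSne' : ((vSpectrum G c v).image f).Nonempty := hS.image f
        rw [setDef_eq _ hSne', setDef_eq _ hS]
        have hsubU : vSpectrum G c v ⊆ U := by
          intro k hk
          obtain ⟨u, hu, hck⟩ := (mem_vSpectrum_iff c v k).mp hk
          exact hck ▸ hmemU _ (G.mem_edgeSet.mpr hu)
        have hcards : ((vSpectrum G c v).image f).card = (vSpectrum G c v).card :=
          Finset.card_image_of_injOn (Set.InjOn.mono hsubU hinj)
        rw [hcards, Finset.max'_image hmono, Finset.min'_image hmono]
        have := hlip ((vSpectrum G c v).min' hS) ((vSpectrum G c v).max' hS)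
          (Finset.min'_le _ _ (Finset.max'_mem _ _))
        omega
    omega

end Aux2


theorem stmt_7 {V : Type*} [Fintype V] (G : SimpleGraph V)
    (h : ¬∃ M : G.Subgraph, M.IsPerfectMatching) :
    2 * (G.minDegree : ℤ) - graphDef G ≤ wdef G := by
  have hne : {t | ∃ c, IsProperTEdgeColoring G t c ∧ colDef G c = graphDef G}.Nonempty := by
    obtain ⟨t, c, hc, hcd⟩ := exists_t_optimal (G := G)
    exact ⟨t, c, hc, hcd⟩
  obtain ⟨c, hc, hcd⟩ := Nat.sInf_mem hne
  exact key_bound (wdef G) c hc hcd h
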